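/- Let U ⊆ ℝ² be open, let u : ℝ × U → ℝ be continuously differentiable, and let T : U → (0,∞) be differentiable with u(x + T(a,E), a, E) = u(x, a, E) for all x ∈ ℝ and (a,E) ∈ U. Then for each (a,E) ∈ U, the function φ₀(x) := ∂ₐT(a,E)·∂_E u(x,a,E) - ∂_E T(a,E)·∂ₐu(x,a,E) is periodic in x with period T(a,E), i.e., φ₀(x + T(a,E)) = φ₀(x) for all x. -/

import Mathlib

/-- The combination `φ₀ = T_a u_E - T_E u_a` of parameter variations of a
`T(a,E)`-periodic family `u(x;a,E)` is itself periodic with period `T(a,E)`. -/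
theorem stmt_9 (U : Set (ℝ × ℝ)) (hU : IsOpen U)
    (u : ℝ → ℝ → ℝ → ℝ)
    (hu : ContDiff ℝ 1 (fun q : ℝ × ℝ × ℝ => u q.1 q.2.1 q.2.2))
    (T : ℝ → ℝ → ℝ)
    (hT : ∀ p ∈ U, DifferentiableAt ℝ (fun q : ℝ × ℝ => T q.1 q.2) p)
    (hTpos : ∀ p ∈ U, 0 < T p.1 p.2)
    (hper : ∀ p ∈ U, ∀ x : ℝ, u (x + T p.1 p.2) p.1 p.2 = u x p.1 p.2) :
    ∀ p ∈ U, ∀ x : ℝ,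
      (fun y : ℝ =>
          deriv (fun a => T a p.2) p.1 * deriv (fun E => u y p.1 E) p.2
            - deriv (fun E => T p.1 E) p.2 * deriv (fun a => u y a p.2) p.1)
        (x + T p.1 p.2)
      = (fun y : ℝ =>
          deriv (fun a => T a p.2) p.1 * deriv (fun E => u y p.1 E) p.2
            - deriv (fun E => T p.1 E) p.2 * deriv (fun a => u y a p.2) p.1) x := by
  intro p hp x
  obtain ⟨a₀, E₀⟩ := p
  simp only at *
  set UF : ℝ × ℝ × ℝ → ℝ := fun q => u q.1 q.2.1 q.2.2 with hUF
  have hud : Differentiable ℝ UF := hu.differentiable one_ne_zero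
  set D : ℝ → (ℝ × ℝ × ℝ) →L[ℝ] ℝ := fun y => fderiv ℝ UF (y, a₀, E₀) with hD
  set τ := T a₀ E₀ with hτ
  set w := x + τ with hw
  -- partial derivatives of u via curves
  have hcurveA : ∀ y : ℝ, HasDerivAt (fun a => u y a E₀) (D y (0, 1, 0)) a₀ := by
    intro y
    have hc : HasDerivAt (fun a : ℝ => ((y, a, E₀) : ℝ × ℝ × ℝ)) (0, 1, 0) a₀ :=
      (hasDerivAt_const _ _).prodMk ((hasDerivAt_id _).prodMk (hasDerivAt_const _ _))
    exact ((hud (y, a₀, E₀)).hasFDerivAt.comp_hasDerivAt a₀ hc)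
  have hcurveE : ∀ y : ℝ, HasDerivAt (fun E => u y a₀ E) (D y (0, 0, 1)) E₀ := by
    intro y
    have hc : HasDerivAt (fun E : ℝ => ((y, a₀, E) : ℝ × ℝ × ℝ)) (0, 0, 1) E₀ :=
      (hasDerivAt_const _ _).prodMk ((hasDerivAt_const _ _).prodMk (hasDerivAt_id _))
    exact ((hud (y, a₀, E₀)).hasFDerivAt.comp_hasDerivAt E₀ hc)
  -- partial derivatives of T
  have hTdiff := hT (a₀, E₀) hp
  have hTa : HasDerivAt (fun a => T a E₀) (deriv (fun a => T a E₀) a₀) a₀ := by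
    have : DifferentiableAt ℝ (fun a => T a E₀) a₀ :=
      by have h := hTdiff.comp a₀ ((differentiableAt_id (𝕜 := ℝ) (x := a₀)).prodMk (differentiableAt_const E₀)); exact h
    exact this.hasDerivAt
  have hTE : HasDerivAt (fun E => T a₀ E) (deriv (fun E => T a₀ E) E₀) E₀ := by
    have : DifferentiableAt ℝ (fun E => T a₀ E) E₀ :=
      hTdiff.comp E₀ ((differentiableAt_const _).prodMk differentiableAt_id)
    exact this.hasDerivAt
  set Ta : ℝ := deriv (fun a => T a E₀) a₀ with hTa'
  set TE : ℝ := deriv (fun E => T a₀ E) E₀ with hTE'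
  -- derivative of a ↦ u (x + T a E₀) a E₀
  have hFA : HasDerivAt (fun a => u (x + T a E₀) a E₀) (D w (Ta, 1, 0)) a₀ := by
    have hc : HasDerivAt (fun a : ℝ => ((x + T a E₀, a, E₀) : ℝ × ℝ × ℝ)) (Ta, 1, 0) a₀ := by
      have h1 : HasDerivAt (fun a : ℝ => x + T a E₀) Ta a₀ := by
        simpa using hTa
      exact h1.prodMk ((hasDerivAt_id _).prodMk (hasDerivAt_const _ _))
    exact ((hud (w, a₀, E₀)).hasFDerivAt.comp_hasDerivAt a₀ hc)
  have hFE : HasDerivAt (fun E => u (x + T a₀ E) a₀ E) (D w (TE, 0, 1)) E₀ := by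
    have hc : HasDerivAt (fun E : ℝ => ((x + T a₀ E, a₀, E) : ℝ × ℝ × ℝ)) (TE, 0, 1) E₀ := by
      have h1 : HasDerivAt (fun E : ℝ => x + T a₀ E) TE E₀ := by
        simpa using hTE
      exact h1.prodMk ((hasDerivAt_const _ _).prodMk (hasDerivAt_id _))
    exact ((hud (w, a₀, E₀)).hasFDerivAt.comp_hasDerivAt E₀ hc)
  -- eventual equality from periodicity
  have hmemA : ∀ᶠ a in nhds a₀, ((a, E₀) : ℝ × ℝ) ∈ U := by
    have : ContinuousAt (fun a : ℝ => ((a, E₀) : ℝ × ℝ)) a₀ :=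
      continuous_id.prodMk continuous_const |>.continuousAt
    exact this (hU.mem_nhds hp)
  have hmemE : ∀ᶠ E in nhds E₀, ((a₀, E) : ℝ × ℝ) ∈ U := by
    have : ContinuousAt (fun E : ℝ => ((a₀, E) : ℝ × ℝ)) E₀ :=
      continuous_const.prodMk continuous_id |>.continuousAt
    exact this (hU.mem_nhds hp)
  have heqA : (fun a => u (x + T a E₀) a E₀) =ᶠ[nhds a₀] fun a => u x a E₀ := by
    filter_upwards [hmemA] with a ha
    exact hper (a, E₀) ha x
  have heqE : (fun E => u (x + T a₀ E) a₀ E) =ᶠ[nhds E₀] fun E => u x a₀ E := by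
    filter_upwards [hmemE] with E hE
    exact hper (a₀, E) hE x
  have hFA' : HasDerivAt (fun a => u x a E₀) (D w (Ta, 1, 0)) a₀ :=
    hFA.congr_of_eventuallyEq heqA.symm
  have hFE' : HasDerivAt (fun E => u x a₀ E) (D w (TE, 0, 1)) E₀ :=
    hFE.congr_of_eventuallyEq heqE.symm
  -- uniqueness of derivative
  have keyA : D x (0, 1, 0) = D w (Ta, 1, 0) := hFA'.unique (hcurveA x)  |>.symm
  have keyE : D x (0, 0, 1) = D w (TE, 0, 1) := hFE'.unique (hcurveE x) |>.symm
  -- linearity decomposition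
  have decompA : D w (Ta, 1, 0) = Ta * D w (1, 0, 0) + D w (0, 1, 0) := by
    have : ((Ta, 1, 0) : ℝ × ℝ × ℝ) = Ta • (1, 0, 0) + (0, 1, 0) := by
      simp [Prod.ext_iff]
    rw [this, map_add, map_smul]; simp
  have decompE : D w (TE, 0, 1) = TE * D w (1, 0, 0) + D w (0, 0, 1) := by
    have : ((TE, 0, 1) : ℝ × ℝ × ℝ) = TE • (1, 0, 0) + (0, 0, 1) := by
      simp [Prod.ext_iff]
    rw [this, map_add, map_smul]; simp
  -- rewrite all derivs in the goal
  have gA : ∀ y, deriv (fun a => u y a E₀) a₀ = D y (0, 1, 0) := fun y => (hcurveA y).deriv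
  have gE : ∀ y, deriv (fun E => u y a₀ E) E₀ = D y (0, 0, 1) := fun y => (hcurveE y).deriv
  rw [gA, gA, gE, gE, keyA, keyE, decompA, decompE]
  ring
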